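/- Let p ≥ 5 be a prime and let q ≥ 2 be an integer. Then d(pq + 1, p, (3p−1)/2) = (pq² − (4p−1)q + 4p − 4)/(4(pq+1)). -/
import Mathlib


/-- Ozsváth–Szabó's recursive formula for the correction terms (d-invariants)
`d(L(p,q), i)` of lens spaces: `d(p, 0, i) = 0` and, for `q ≥ 1`,
`d(p, q, i) = -1/4 + (2i + 1 - p - q)^2 / (4pq) - d(q, p mod q, i mod q)`. -/
def lensD (p q i : ℕ) : ℚ :=
  if h : q = 0 then 0
  else -1/4 + ((2 * i + 1 - p - q : ℚ)) ^ 2 / (4 * p * q)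
       - lensD q (p % q) (i % q)
termination_by q
decreasing_by exact Nat.mod_lt _ (Nat.pos_of_ne_zero h)

/-- For `p ≥ 5` prime and `q ≥ 2`,
`d(pq + 1, p, (3p-1)/2) = (pq² - (4p-1)q + 4p - 4) / (4(pq+1))`. -/
theorem lensD_pq_add_one' (p q : ℕ) (hp : p.Prime) (hp5 : 5 ≤ p) (hq : 2 ≤ q) :
    lensD (p * q + 1) p ((3 * p - 1) / 2) =
      ((p : ℚ) * q ^ 2 - (4 * p - 1) * q + 4 * p - 4) / (4 * ((p : ℚ) * q + 1)) := by
  have hodd : p % 2 = 1 := by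
    rcases hp.eq_two_or_odd with h | h
    · omega
    · exact h
  set i := (3 * p - 1) / 2 with hi
  have h2i : 2 * i = 3 * p - 1 := by omega
  have hmod1 : (p * q + 1) % p = 1 := by
    rw [Nat.mul_add_mod, Nat.mod_eq_of_lt (by omega)]
  have himod : i % p = (p - 1) / 2 := by
    have hieq : i = p + (p - 1) / 2 := by omega
    rw [hieq, Nat.add_mod_left, Nat.mod_eq_of_lt (by omega)]
  have h2j : 2 * ((p - 1) / 2) = p - 1 := by omega
  rw [lensD, dif_neg (by omega : p ≠ 0), hmod1, himod,
      lensD, dif_neg (by omega : (1:ℕ) ≠ 0), Nat.mod_one,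
      lensD, dif_pos rfl]
  have hip : (i : ℚ) = (3 * p - 1) / 2 := by
    have := congrArg (Nat.cast : ℕ → ℚ) h2i
    push_cast [Nat.cast_sub (by omega : 1 ≤ 3 * p)] at this
    linarith
  have hjp : (((p - 1) / 2 : ℕ) : ℚ) = (p - 1) / 2 := by
    have := congrArg (Nat.cast : ℕ → ℚ) h2j
    push_cast [Nat.cast_sub (by omega : 1 ≤ p)] at this
    linarith
  have hP : (p : ℚ) > 0 := by positivity
  have hPQ : (p : ℚ) * q + 1 > 0 := by positivity
  push_cast [hip, hjp]
  have h1 : (4 : ℚ) * (p * q + 1) * p ≠ 0 := by positivity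
  have h2 : (4 : ℚ) * p * 1 ≠ 0 := by positivity
  field_simp
  ring
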